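/- arXiv:1907.08355 — 3 statements merged into one kernel-verified Lean document; each statement's English description precedes it below -/
import Mathlib

section
/- Let G be a finite abelian group, let Q : G → Finset [S] assign to each element of G a set of at most T probes, and let v ≥ T. Then there exists a subset V ⊆ [S] of size v such that the number of b ∈ G with Q(b) ⊆ V is at least |G| · ((v−T)/(S−T))^T. -/
open Finset

lemma stmt2_count_supersets {n : ℕ} (s : Finset (Fin n)) (v : ℕ) (hs : s.card ≤ v) :
    ((Finset.powersetCard v (Finset.univ : Finset (Fin n))).filter (fun V => s ⊆ V)).card
      = Nat.choose (n - s.card) (v - s.card) := by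
  have : ((Finset.powersetCard v (Finset.univ : Finset (Fin n))).filter (fun V => s ⊆ V)).card
      = (Finset.powersetCard (v - s.card) sᶜ).card := by
    apply Finset.card_bij (fun V _ => V \ s)
    · intro V hV
      simp only [mem_filter, Finset.mem_powersetCard_univ] at hV
      rw [Finset.mem_powersetCard]
      refine ⟨fun x hx => ?_, ?_⟩
      · simp only [Finset.mem_sdiff] at hx
        simp [hx.2]
      · rw [Finset.card_sdiff_of_subset hV.2, hV.1]
    · intro V1 h1 V2 h2 h
      simp only [mem_filter, Finset.mem_powersetCard_univ] at h1 h2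
      rw [← Finset.sdiff_union_of_subset h1.2, ← Finset.sdiff_union_of_subset h2.2, h]
    · intro W hW
      rw [Finset.mem_powersetCard] at hW
      have hdisj : Disjoint W s := by
        rw [Finset.disjoint_right]
        intro a ha hW'
        have := hW.1 hW'
        simp at this
        exact this ha
      refine ⟨W ∪ s, ?_, ?_⟩
      · simp only [mem_filter, Finset.mem_powersetCard_univ]
        refine ⟨?_, Finset.subset_union_right⟩
        rw [Finset.card_union_of_disjoint hdisj, hW.2]
        omega
      · rw [Finset.union_sdiff_right, Finset.sdiff_eq_self_of_disjoint hdisj]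
  rw [this, Finset.card_powersetCard, Finset.card_compl, Fintype.card_fin]

lemma stmt2_choose_prod (S v : ℕ) (hvS : v ≤ S) :
    ∀ q, q ≤ v →
      Nat.choose S v * ∏ i ∈ Finset.range q, (v - i)
        = Nat.choose (S - q) (v - q) * ∏ i ∈ Finset.range q, (S - i) := by
  intro q
  induction q with
  | zero => simp
  | succ q ih =>
    intro hq
    have hq' : q ≤ v := by omega
    rw [Finset.prod_range_succ, Finset.prod_range_succ, ← mul_assoc, ← mul_assoc, ih hq']
    have key : Nat.choose (S - q) (v - q) * (v - q) = Nat.choose (S - (q+1)) (v - (q+1)) * (S - q) := by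
      have h1 : S - q = (S - (q+1)) + 1 := by omega
      have h2 : v - q = (v - (q+1)) + 1 := by omega
      have := Nat.add_one_mul_choose_eq (S - (q+1)) (v - (q+1))
      rw [h1, h2, ← this]
      ring
    rw [mul_right_comm, key, mul_right_comm]
  
lemma stmt2_real_bound (S T v q : ℕ) (hq : q ≤ T) (hTv : T < v) (hvS : v ≤ S) :
    (Nat.choose S v : ℝ) * (((v : ℝ) - T) / ((S : ℝ) - T)) ^ T
      ≤ (Nat.choose (S - q) (v - q) : ℝ) := by
  set r : ℝ := ((v : ℝ) - T) / ((S : ℝ) - T) with hr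
  have hST : (T : ℝ) < S := by exact_mod_cast lt_of_lt_of_le hTv hvS
  have hTv' : (T : ℝ) < v := by exact_mod_cast hTv
  have hr0 : 0 ≤ r := by
    apply div_nonneg <;> linarith
  have hr1 : r ≤ 1 := by
    rw [div_le_one (by linarith)]
    have : (v : ℝ) ≤ S := by exact_mod_cast hvS
    linarith
  have hid := stmt2_choose_prod S v hvS q (by omega)
  have hidR : (Nat.choose S v : ℝ) * ∏ i ∈ Finset.range q, ((v : ℝ) - i)
      = (Nat.choose (S - q) (v - q) : ℝ) * ∏ i ∈ Finset.range q, ((S : ℝ) - i) := by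
    have := congrArg (fun n : ℕ => (n : ℝ)) hid
    push_cast at this
    rw [Finset.prod_congr rfl (fun i hi => ?_), this,
      Finset.prod_congr rfl (fun i hi => ?_)]
    · rw [Nat.cast_sub (by simp at hi; omega)]
    · rw [Nat.cast_sub (by simp at hi; omega)]
  have hfac : ∀ i ∈ Finset.range q, r ≤ ((v : ℝ) - i) / ((S : ℝ) - i) := by
    intro i hi
    simp only [Finset.mem_range] at hi
    have hiT : (i : ℝ) < T := by exact_mod_cast lt_of_lt_of_le hi hq
    have hvS' : (v : ℝ) ≤ S := by exact_mod_cast hvS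
    rw [hr, div_le_div_iff₀ (by linarith) (by linarith)]
    nlinarith
  have hprod : r ^ q ≤ ∏ i ∈ Finset.range q, ((v : ℝ) - i) / ((S : ℝ) - i) := by
    have := Finset.prod_le_prod (s := Finset.range q) (f := fun _ => r) (fun i _ => hr0) hfac
    simpa using this
  have hPpos : 0 < ∏ i ∈ Finset.range q, ((S : ℝ) - i) := by
    apply Finset.prod_pos
    intro i hi
    simp only [Finset.mem_range] at hi
    have : (i : ℝ) < T := by exact_mod_cast lt_of_lt_of_le hi hq
    linarith
  have heq : (Nat.choose (S - q) (v - q) : ℝ)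
      = (Nat.choose S v : ℝ) * ∏ i ∈ Finset.range q, (((v : ℝ) - i) / ((S : ℝ) - i)) := by
    rw [Finset.prod_div_distrib, ← mul_div_assoc, eq_div_iff (ne_of_gt hPpos), hidR]
  rw [heq]
  have hrT : r ^ T ≤ r ^ q := pow_le_pow_of_le_one hr0 hr1 hq
  have : (0 : ℝ) ≤ Nat.choose S v := Nat.cast_nonneg _
  calc (Nat.choose S v : ℝ) * r ^ T ≤ (Nat.choose S v : ℝ) * r ^ q := by
        apply mul_le_mul_of_nonneg_left hrT this
    _ ≤ _ := mul_le_mul_of_nonneg_left hprod this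

theorem stmt_2 (G : Type) [AddCommGroup G] [Fintype G] [DecidableEq G]
    (S T v : ℕ) (hT : 0 < T) (hTv : T ≤ v) (hvS : v ≤ S)
    (Q : G → Finset (Fin S)) (hQ : ∀ b, (Q b).card ≤ T) :
    ∃ V : Finset (Fin S), V.card = v ∧
      (Fintype.card G : ℝ) * (((v : ℝ) - T) / ((S : ℝ) - T)) ^ T ≤
        ((Finset.univ.filter (fun b : G => Q b ⊆ V)).card : ℝ) := by
  by_cases hTv' : T < v
  · -- averaging argument
    set r : ℝ := ((v : ℝ) - T) / ((S : ℝ) - T) with hr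
    set 𝒱 := Finset.powersetCard v (Finset.univ : Finset (Fin S)) with h𝒱
    have h𝒱card : 𝒱.card = Nat.choose S v := by
      rw [h𝒱, Finset.card_powersetCard, Finset.card_univ, Fintype.card_fin]
    have h𝒱ne : 𝒱.Nonempty := by
      rw [← Finset.card_pos, h𝒱card]
      exact Nat.choose_pos hvS
    have hsum : ∑ V ∈ 𝒱, (Finset.univ.filter (fun b : G => Q b ⊆ V)).card
        = ∑ b : G, Nat.choose (S - (Q b).card) (v - (Q b).card) := by
      simp only [Finset.card_filter]
      rw [Finset.sum_comm]
      refine Finset.sum_congr rfl fun b _ => ?_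
      rw [← Finset.card_filter]
      exact stmt2_count_supersets (Q b) v (le_trans (hQ b) hTv)
    have hsumR : (Fintype.card G : ℝ) * (Nat.choose S v : ℝ) * r ^ T
        ≤ ∑ V ∈ 𝒱, ((Finset.univ.filter (fun b : G => Q b ⊆ V)).card : ℝ) := by
      have : (∑ V ∈ 𝒱, ((Finset.univ.filter (fun b : G => Q b ⊆ V)).card : ℝ))
          = ∑ b : G, (Nat.choose (S - (Q b).card) (v - (Q b).card) : ℝ) := by
        exact_mod_cast congrArg (fun n : ℕ => (n : ℝ)) hsum
      rw [this]
      calc (Fintype.card G : ℝ) * (Nat.choose S v : ℝ) * r ^ T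
          = ∑ _b : G, (Nat.choose S v : ℝ) * r ^ T := by
            rw [Finset.sum_const, Finset.card_univ, nsmul_eq_mul]; ring
        _ ≤ _ := Finset.sum_le_sum fun b _ =>
            stmt2_real_bound S T v (Q b).card (hQ b) hTv' hvS
    obtain ⟨V, hV𝒱, hV⟩ := Finset.exists_le_of_sum_le h𝒱ne (by
      calc ∑ _V ∈ 𝒱, (Fintype.card G : ℝ) * r ^ T
          = (Fintype.card G : ℝ) * (Nat.choose S v : ℝ) * r ^ T := by
            rw [Finset.sum_const, h𝒱card, nsmul_eq_mul]; ring
        _ ≤ _ := hsumR)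
    refine ⟨V, ?_, hV⟩
    rwa [h𝒱, Finset.mem_powersetCard_univ] at hV𝒱
  · -- v = T : the bound is zero
    have hvT : v = T := by omega
    obtain ⟨V, _, hVcard⟩ := Finset.exists_subset_card_eq (s := (Finset.univ : Finset (Fin S)))
      (n := v) (by simpa using hvS)
    refine ⟨V, hVcard, ?_⟩
    rw [hvT, sub_self, zero_div, zero_pow (by omega), mul_zero]
    positivity
end

section
/- Let N ≥ k−1 and let G be a finite abelian group of size at least N. If a₁,...,a_N are drawn independently and uniformly from G, and Z is the set of all sums Σ_{i∈I} a_i over subsets I ⊆ [N] of size k−1, then C(N, k−1) − E[|Z|] ≤ C(N, k−1)² / |G|. -/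
open Finset

/-- Lemma A: card loss under image is bounded by number of ordered distinct collisions. -/
lemma lemA {α β : Type*} [DecidableEq α] [DecidableEq β] (S : Finset α) (f : α → β) :
    S.card ≤ (S.image f).card +
      ((S ×ˢ S).filter fun p => p.1 ≠ p.2 ∧ f p.1 = f p.2).card := by
  have h1 : S.card = ∑ b ∈ S.image f, (S.filter fun x => f x = b).card :=
    Finset.card_eq_sum_card_fiberwise (fun x hx => Finset.mem_image_of_mem f hx)
  have h2 : ((S ×ˢ S).filter fun p => p.1 ≠ p.2 ∧ f p.1 = f p.2).card
      = ∑ b ∈ S.image f, ((S.filter fun x => f x = b).offDiag).card := by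
    rw [Finset.card_eq_sum_card_fiberwise
      (f := fun p : α × α => f p.1) (t := S.image f)
      (fun p hp => by
        simp only [Finset.mem_coe, Finset.mem_filter, Finset.mem_product] at hp
        exact Finset.mem_image_of_mem f hp.1.1)]
    refine Finset.sum_congr rfl fun b _ => ?_
    congr 1
    ext ⟨x, y⟩
    simp only [Finset.mem_filter, Finset.mem_product, Finset.mem_offDiag, Finset.mem_filter,
      Finset.mem_product]
    constructor
    · rintro ⟨⟨⟨hx, hy⟩, hne, heq⟩, hb⟩
      exact ⟨⟨hx, hb⟩, ⟨hy, heq ▸ hb⟩, hne⟩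
    · rintro ⟨⟨hx, hbx⟩, ⟨hy, hby⟩, hne⟩
      exact ⟨⟨⟨hx, hy⟩, hne, hbx.trans hby.symm⟩, hbx⟩
  rw [h1, h2]
  have key : ∀ b ∈ S.image f, (S.filter fun x => f x = b).card
      ≤ 1 + ((S.filter fun x => f x = b).offDiag).card := by
    intro b _
    rw [Finset.offDiag_card]
    set m := (S.filter fun x => f x = b).card
    rcases Nat.eq_zero_or_pos m with h | h
    · simp [h]
    · have hm : 2 * m ≤ m * m + 1 := by nlinarith
      omega
  calc ∑ b ∈ S.image f, (S.filter fun x => f x = b).card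
      ≤ ∑ b ∈ S.image f, (1 + ((S.filter fun x => f x = b).offDiag).card) :=
        Finset.sum_le_sum key
    _ = (S.image f).card + ∑ b ∈ S.image f, ((S.filter fun x => f x = b).offDiag).card := by
        rw [Finset.sum_add_distrib, Finset.sum_const, smul_eq_mul, mul_one]

lemma count_fix {N : ℕ} {G : Type} [AddCommGroup G] [Fintype G] [DecidableEq G]
    (i₀ : Fin N) (g : (Fin N → G) → G)
    (hg : ∀ a b : Fin N → G, (∀ j, j ≠ i₀ → a j = b j) → g a = g b) :
    (Finset.univ.filter fun a : Fin N → G => a i₀ = g a).card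
      = Fintype.card G ^ (N - 1) := by
  classical
  have hcard : Fintype.card {j : Fin N // j ≠ i₀} = N - 1 := by
    rw [Fintype.card_subtype_compl, Fintype.card_subtype_eq, Fintype.card_fin]
  set ext : ({j : Fin N // j ≠ i₀} → G) → (Fin N → G) :=
    fun y j => if h : j ≠ i₀ then y ⟨j, h⟩ else 0 with hext
  have hagree : ∀ y, ∀ j, j ≠ i₀ →
      (Function.update (ext y) i₀ (g (ext y))) j = ext y j := by
    intro y j hj
    exact Function.update_of_ne hj _ _
  let e : {a : Fin N → G // a i₀ = g a} ≃ ({j : Fin N // j ≠ i₀} → G) :=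
    { toFun := fun a j => a.1 j.1
      invFun := fun y => ⟨Function.update (ext y) i₀ (g (ext y)), by
        rw [Function.update_self]
        exact (hg _ _ (fun j hj => (hagree y j hj))).symm⟩
      left_inv := by
        rintro ⟨a, ha⟩
        ext j
        simp only
        by_cases hj : j = i₀
        · subst hj
          rw [Function.update_self]
          exact (hg _ a fun j hj => by simp [hext, hj]).trans ha.symm
        · rw [Function.update_of_ne hj]
          simp [hext, hj]
      right_inv := by
        intro y
        funext j
        simp only
        rw [hagree y j.1 j.2]
        simp [hext, j.2] }
  rw [← Fintype.card_subtype, Fintype.card_congr e, Fintype.card_fun, hcard]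

/-- The set of `(k-1)`-wise sums of the coordinates of `a`. -/
def sumsSet (k N : ℕ) {G : Type} [AddCommMonoid G] [DecidableEq G]
    (a : Fin N → G) : Finset G :=
  (Finset.powersetCard (k - 1) (Finset.univ : Finset (Fin N))).image (fun I => ∑ i ∈ I, a i)

theorem stmt_3 (k N : ℕ) (hk : 3 ≤ k) (hN : k - 1 ≤ N)
    (G : Type) [AddCommGroup G] [Fintype G] [DecidableEq G]
    (hG : N ≤ Fintype.card G) :
    (N.choose (k - 1) : ℝ) -
        (∑ a : Fin N → G, ((sumsSet k N a).card : ℝ)) / (Fintype.card G : ℝ) ^ N ≤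
      (N.choose (k - 1) : ℝ) ^ 2 / (Fintype.card G : ℝ) := by
  classical
  set q := Fintype.card G with hqdef
  have hN2 : 2 ≤ N := le_trans (by omega) hN
  have hq2 : 2 ≤ q := le_trans hN2 hG
  set S : Finset (Finset (Fin N)) :=
    Finset.powersetCard (k - 1) (Finset.univ : Finset (Fin N)) with hSdef
  have hScard : S.card = N.choose (k - 1) := by
    rw [hSdef, Finset.card_powersetCard, Finset.card_univ, Fintype.card_fin]
  -- step 1 : pointwise bound
  have step1 : ∀ a : Fin N → G, S.card ≤ (sumsSet k N a).card +
      ((S ×ˢ S).filter fun p =>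
        p.1 ≠ p.2 ∧ (∑ i ∈ p.1, a i) = ∑ i ∈ p.2, a i).card :=
    fun a => lemA S (fun I => ∑ i ∈ I, a i)
  -- per-pair count
  have pairBound : ∀ p : Finset (Fin N) × Finset (Fin N), p ∈ S ×ˢ S →
      (Finset.univ.filter fun a : Fin N → G =>
        p.1 ≠ p.2 ∧ (∑ i ∈ p.1, a i) = ∑ i ∈ p.2, a i).card ≤ q ^ (N - 1) := by
    rintro ⟨I, J⟩ hp
    obtain ⟨hI, hJ⟩ := Finset.mem_product.mp hp
    by_cases hne : I = J
    · simp [hne]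
    · have hIc : I.card = k - 1 := (Finset.mem_powersetCard.mp hI).2
      have hJc : J.card = k - 1 := (Finset.mem_powersetCard.mp hJ).2
      have hex : ∃ i₀ ∈ I, i₀ ∉ J := by
        by_contra h
        push_neg at h
        exact hne (Finset.eq_of_subset_of_card_le h (by omega))
      obtain ⟨i₀, hi₀I, hi₀J⟩ := hex
      have key : (Finset.univ.filter fun a : Fin N → G =>
          I ≠ J ∧ (∑ i ∈ I, a i) = ∑ i ∈ J, a i)
          = (Finset.univ.filter fun a : Fin N → G =>
            a i₀ = (∑ j ∈ J, a j) - ∑ i ∈ I.erase i₀, a i) := by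
        ext a
        simp only [Finset.mem_filter, Finset.mem_univ, true_and, hne, ne_eq,
          not_false_iff]
        rw [eq_sub_iff_add_eq, Finset.add_sum_erase I a hi₀I]
      rw [key, count_fix i₀ _ ?_]
      intro a b hab
      have h1 : ∀ j ∈ J, a j = b j := fun j hj =>
        hab j (by rintro rfl; exact hi₀J hj)
      have h2 : ∀ i ∈ I.erase i₀, a i = b i := fun i hi =>
        hab i (Finset.ne_of_mem_erase hi)
      rw [Finset.sum_congr rfl h1, Finset.sum_congr rfl h2]
  -- step 2 : total collision count
  have swap : (∑ a : Fin N → G, ((S ×ˢ S).filter fun p =>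
        p.1 ≠ p.2 ∧ (∑ i ∈ p.1, a i) = ∑ i ∈ p.2, a i).card)
      = ∑ p ∈ S ×ˢ S, (Finset.univ.filter fun a : Fin N → G =>
          p.1 ≠ p.2 ∧ (∑ i ∈ p.1, a i) = ∑ i ∈ p.2, a i).card := by
    simp only [Finset.card_filter]
    exact Finset.sum_comm
  have step2 : (∑ a : Fin N → G, ((S ×ˢ S).filter fun p =>
        p.1 ≠ p.2 ∧ (∑ i ∈ p.1, a i) = ∑ i ∈ p.2, a i).card)
      ≤ N.choose (k - 1) ^ 2 * q ^ (N - 1) := by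
    rw [swap]
    calc ∑ p ∈ S ×ˢ S, (Finset.univ.filter fun a : Fin N → G =>
          p.1 ≠ p.2 ∧ (∑ i ∈ p.1, a i) = ∑ i ∈ p.2, a i).card
        ≤ ∑ _p ∈ S ×ˢ S, q ^ (N - 1) := Finset.sum_le_sum pairBound
      _ = N.choose (k - 1) ^ 2 * q ^ (N - 1) := by
          rw [Finset.sum_const, smul_eq_mul, Finset.card_product, hScard, sq]
  -- main nat inequality
  have hcardfun : Fintype.card (Fin N → G) = q ^ N := by
    rw [Fintype.card_fun, Fintype.card_fin]
  have natineq : N.choose (k - 1) * q ^ N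
      ≤ (∑ a : Fin N → G, (sumsSet k N a).card) + N.choose (k - 1) ^ 2 * q ^ (N - 1) := by
    have h := Finset.sum_le_sum (fun a (_ : a ∈ (Finset.univ : Finset (Fin N → G))) => step1 a)
    rw [Finset.sum_const, smul_eq_mul, Finset.card_univ, hcardfun, hScard,
      Finset.sum_add_distrib] at h
    calc N.choose (k - 1) * q ^ N = q ^ N * N.choose (k - 1) := mul_comm _ _
      _ ≤ _ := h
      _ ≤ _ := Nat.add_le_add_left step2 _
  -- pass to the reals
  have hq0 : (0:ℝ) < (q:ℝ) := by
    have : 0 < q := Nat.lt_of_lt_of_le Nat.zero_lt_two hq2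
    exact_mod_cast this
  have hqN0 : (0:ℝ) < (q:ℝ) ^ N := pow_pos hq0 N
  have hmainR : (N.choose (k - 1) : ℝ) * (q:ℝ) ^ N
      ≤ (∑ a : Fin N → G, ((sumsSet k N a).card : ℝ))
        + (N.choose (k - 1) : ℝ) ^ 2 * (q:ℝ) ^ (N - 1) := by
    exact_mod_cast natineq
  have hsplit : ((q:ℝ)) ^ N = (q:ℝ) ^ (N - 1) * (q:ℝ) := by
    rw [← pow_succ]
    congr 1
    exact (Nat.succ_pred_eq_of_pos (Nat.lt_of_lt_of_le Nat.zero_lt_two hN2)).symm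
  have h2 : (N.choose (k - 1) : ℝ) ^ 2 * (q:ℝ) ^ (N - 1) / (q:ℝ) ^ N
      = (N.choose (k - 1) : ℝ) ^ 2 / (q:ℝ) := by
    rw [hsplit, mul_comm ((q:ℝ) ^ (N - 1)) (q:ℝ),
      mul_div_mul_right _ _ (ne_of_gt (pow_pos hq0 (N - 1)))]
  rw [sub_le_iff_le_add, ← h2, ← add_div, le_div_iff₀ hqN0]
  linarith [hmainR]
end

section
/- Let N ≥ k−1 be an integer, G a finite abelian group with |G| ≥ N^{k−1+c} for some c > 0, and let A = (a₁,...,a_N) be i.i.d. uniform in G. Let X₁ = Σ_{i∈I} a_i for a uniformly random (k−1)-subset I of [N], and let X₂ be uniform on the set Z of all (k−1)-wise sums of coordinates of A. Then the statistical distance between the joint distributions (A, X₁) and (A, X₂) is O(1/√(N^c)); concretely it is at most 1/((k−1)! N^{c/2}) + N^{−c/2}. -/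
/-- Probability that the sum over a uniformly random `(k-1)`-subset equals `g`,
    for a fixed tuple `a`. -/
noncomputable def pSum (k N : ℕ) {G : Type} [AddCommMonoid G] [DecidableEq G]
    (a : Fin N → G) (g : G) : ℝ :=
  (((Finset.powersetCard (k - 1) (Finset.univ : Finset (Fin N))).filter
      (fun I => ∑ i ∈ I, a i = g)).card : ℝ) / (N.choose (k - 1) : ℝ)

/-- Probability that a uniform element of the sum set `Z` equals `g`,
    for a fixed tuple `a`. -/
noncomputable def pUnif (k N : ℕ) {G : Type} [AddCommMonoid G] [DecidableEq G]
    (a : Fin N → G) (g : G) : ℝ :=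
  if g ∈ sumsSet k N a then 1 / ((sumsSet k N a).card : ℝ) else 0

open Finset

section aux
variable {N : ℕ} {G : Type} [AddCommGroup G] [Fintype G] [DecidableEq G]

/-- Counting solutions of a nontrivial linear equation. -/
lemma countSol_le (I J : Finset (Fin N)) (hIJ : I ≠ J) (hcard : I.card = J.card) :
    ((Finset.univ.filter fun a : Fin N → G => ∑ i ∈ I, a i = ∑ i ∈ J, a i).card
      ≤ Fintype.card G ^ (N - 1)) := by
  have hsd : (I \ J).Nonempty := by
    rw [Finset.sdiff_nonempty]
    intro hsub
    exact hIJ (Finset.eq_of_subset_of_card_le hsub (le_of_eq hcard.symm))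
  obtain ⟨i0, hi0⟩ := hsd
  rw [Finset.mem_sdiff] at hi0
  obtain ⟨hi0I, hi0J⟩ := hi0
  have key := Finset.card_le_card_of_injOn
    (f := fun (a : Fin N → G) => (fun i : {i : Fin N // i ≠ i0} => a i.1))
    (s := Finset.univ.filter fun a : Fin N → G => ∑ i ∈ I, a i = ∑ i ∈ J, a i)
    (t := (Finset.univ : Finset ({i : Fin N // i ≠ i0} → G)))
    (fun _ _ => Finset.mem_univ _) ?_
  · calc _ ≤ (Finset.univ : Finset ({i : Fin N // i ≠ i0} → G)).card := key
      _ = Fintype.card G ^ (N - 1) := by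
        rw [Finset.card_univ, Fintype.card_fun]
        congr 1
        have : Fintype.card {i : Fin N // i ≠ i0} = Fintype.card {i : Fin N // ¬ (i = i0)} := rfl
        rw [this, Fintype.card_subtype_compl, Fintype.card_subtype_eq, Fintype.card_fin]
  · intro a ha b hb hab
    simp only [Finset.mem_coe, Finset.mem_filter, Finset.mem_univ, true_and] at ha hb
    have hrest : ∀ i : Fin N, i ≠ i0 → a i = b i := fun i hi => congrFun hab ⟨i, hi⟩
    funext i
    by_cases hii : i = i0
    · subst hii
      have hJ : ∑ j ∈ J, a j = ∑ j ∈ J, b j :=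
        Finset.sum_congr rfl fun j hj => hrest j (fun h => hi0J (h ▸ hj))
      have hE : ∑ j ∈ I.erase i, a j = ∑ j ∈ I.erase i, b j :=
        Finset.sum_congr rfl fun j hj => hrest j (Finset.ne_of_mem_erase hj)
      have ha' : a i + ∑ j ∈ I.erase i, a j = ∑ j ∈ J, a j := by
        rw [Finset.add_sum_erase I a hi0I, ha]
      have hb' : b i + ∑ j ∈ I.erase i, b j = ∑ j ∈ J, b j := by
        rw [Finset.add_sum_erase I b hi0I, hb]
      have : a i + ∑ j ∈ I.erase i, a j = b i + ∑ j ∈ I.erase i, a j := by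
        rw [ha', hJ, hE, hb']
      exact add_right_cancel this
    · exact hrest i hii

end aux

/-- The deficiency of an image is at most the number of ordered collision pairs. -/
lemma deficiency_le {α β : Type*} [DecidableEq α] [DecidableEq β] (P : Finset α) (f : α → β) :
    (P.card : ℝ) - ((P.image f).card : ℝ) ≤
      ((((P ×ˢ P).filter fun p => p.1 ≠ p.2 ∧ f p.1 = f p.2).card : ℝ)) := by
  have hcard := Finset.card_eq_sum_card_image f P
  set Z := P.image f with hZ
  have hsub : Z.biUnion (fun b => (P.filter fun x => f x = b).offDiag) ⊆
      ((P ×ˢ P).filter fun p => p.1 ≠ p.2 ∧ f p.1 = f p.2) := by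
    intro p hp
    simp only [Finset.mem_biUnion, Finset.mem_offDiag, Finset.mem_filter] at hp ⊢
    obtain ⟨b, _, ⟨h1, h1'⟩, ⟨h2, h2'⟩, hne⟩ := hp
    exact ⟨Finset.mem_product.2 ⟨h1, h2⟩, hne, by rw [h1', h2']⟩
  have hdisj : ∀ b ∈ Z, ∀ b' ∈ Z, b ≠ b' →
      Disjoint ((P.filter fun x => f x = b).offDiag)
        ((P.filter fun x => f x = b').offDiag) := by
    intro b _ b' _ hbb'
    rw [Finset.disjoint_left]
    intro p hp hp'
    rw [Finset.mem_offDiag] at hp hp'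
    exact hbb' ((Finset.mem_filter.1 hp.1).2 ▸ (Finset.mem_filter.1 hp'.1).2 ▸ rfl)
  have hbu := Finset.card_biUnion hdisj
  have hle1 : (Z.biUnion (fun b => (P.filter fun x => f x = b).offDiag)).card ≤
      ((P ×ˢ P).filter fun p => p.1 ≠ p.2 ∧ f p.1 = f p.2).card :=
    Finset.card_le_card hsub
  have hfib1 : ∀ b ∈ Z, 1 ≤ (P.filter fun x => f x = b).card := by
    intro b hb
    obtain ⟨x, hx, hfx⟩ := Finset.mem_image.1 hb
    exact Finset.card_pos.2 ⟨x, Finset.mem_filter.2 ⟨hx, hfx⟩⟩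
  calc (P.card : ℝ) - (Z.card : ℝ)
      = ∑ b ∈ Z, (((P.filter fun x => f x = b).card : ℝ) - 1) := by
        rw [Finset.sum_sub_distrib, Finset.sum_const, nsmul_eq_mul, mul_one]
        rw [hcard]; push_cast; ring
    _ ≤ ∑ b ∈ Z, (((P.filter fun x => f x = b).offDiag.card : ℝ)) := by
        apply Finset.sum_le_sum
        intro b hb
        have h1 := hfib1 b hb
        set n := (P.filter fun x => f x = b).card
        rw [Finset.offDiag_card]
        have hle : n ≤ n * n := Nat.le_mul_of_pos_left n h1
        rw [Nat.cast_sub hle]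
        push_cast
        nlinarith [h1, (Nat.one_le_cast (α := ℝ)).2 h1]
    _ = ((Z.biUnion (fun b => (P.filter fun x => f x = b).offDiag)).card : ℝ) := by
        rw [hbu]; push_cast; rfl
    _ ≤ _ := by exact_mod_cast hle1

lemma tv_le (k N : ℕ) {G : Type} [AddCommMonoid G] [Fintype G] [DecidableEq G]
    (hN : k - 1 ≤ N) (a : Fin N → G) :
    ∑ g : G, |pSum k N a g - pUnif k N a g| ≤
      2 * (((N.choose (k-1) : ℝ) - ((sumsSet k N a).card : ℝ)) / (N.choose (k-1) : ℝ)) := by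
  have hCpos : 0 < N.choose (k - 1) := Nat.choose_pos hN
  have hCR : (0:ℝ) < (N.choose (k-1) : ℝ) := by exact_mod_cast hCpos
  have hPcard : (Finset.powersetCard (k - 1) (Finset.univ : Finset (Fin N))).card
      = N.choose (k - 1) := by
    rw [Finset.card_powersetCard, Finset.card_univ, Fintype.card_fin]
  have hmC : (sumsSet k N a).card ≤ N.choose (k - 1) := by
    rw [← hPcard]; exact Finset.card_image_le
  have hm1 : 0 < (sumsSet k N a).card := by
    apply Finset.card_pos.2
    apply Finset.Nonempty.image
    rw [Finset.powersetCard_nonempty]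
    simpa using hN
  have hmR : (0:ℝ) < ((sumsSet k N a).card : ℝ) := by exact_mod_cast hm1
  have hzero : ∀ g ∈ (Finset.univ : Finset G), g ∉ sumsSet k N a →
      |pSum k N a g - pUnif k N a g| = 0 := by
    intro g _ hg
    have h1 : pUnif k N a g = 0 := if_neg hg
    have h2 : pSum k N a g = 0 := by
      unfold pSum
      have : (Finset.powersetCard (k - 1) (Finset.univ : Finset (Fin N))).filter
          (fun I => ∑ i ∈ I, a i = g) = ∅ := by
        rw [Finset.filter_eq_empty_iff]
        intro I hI hIg
        exact hg (Finset.mem_image.2 ⟨I, hI, hIg⟩)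
      rw [this]; simp
    rw [h1, h2]; simp
  rw [← Finset.sum_subset (Finset.subset_univ (sumsSet k N a)) hzero]
  have hsum : ∑ g ∈ sumsSet k N a,
      (((Finset.powersetCard (k - 1) (Finset.univ : Finset (Fin N))).filter
        (fun I => ∑ i ∈ I, a i = g)).card : ℝ) = (N.choose (k-1) : ℝ) := by
    rw [← hPcard,
      Finset.card_eq_sum_card_image (fun I => ∑ i ∈ I, a i)
        (Finset.powersetCard (k - 1) (Finset.univ : Finset (Fin N)))]
    push_cast
    rfl
  calc ∑ g ∈ sumsSet k N a, |pSum k N a g - pUnif k N a g|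
      ≤ ∑ g ∈ sumsSet k N a,
          (((((Finset.powersetCard (k - 1) (Finset.univ : Finset (Fin N))).filter
              (fun I => ∑ i ∈ I, a i = g)).card : ℝ) - 1) / (N.choose (k-1) : ℝ)
            + (1 / ((sumsSet k N a).card : ℝ) - 1 / (N.choose (k-1) : ℝ))) := by
        apply Finset.sum_le_sum
        intro g hg
        have hc1 : (1:ℝ) ≤ (((Finset.powersetCard (k - 1) (Finset.univ : Finset (Fin N))).filter
            (fun I => ∑ i ∈ I, a i = g)).card : ℝ) := by
          have : 0 < ((Finset.powersetCard (k - 1) (Finset.univ : Finset (Fin N))).filter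
              (fun I => ∑ i ∈ I, a i = g)).card := by
            obtain ⟨I, hI, hIg⟩ := Finset.mem_image.1 hg
            exact Finset.card_pos.2 ⟨I, Finset.mem_filter.2 ⟨hI, hIg⟩⟩
          exact_mod_cast this
        have hinv : 1 / (N.choose (k-1) : ℝ) ≤ 1 / ((sumsSet k N a).card : ℝ) :=
          one_div_le_one_div_of_le hmR (by exact_mod_cast hmC)
        have hcC : 1 / (N.choose (k-1) : ℝ) ≤
            (((Finset.powersetCard (k - 1) (Finset.univ : Finset (Fin N))).filter
              (fun I => ∑ i ∈ I, a i = g)).card : ℝ) / (N.choose (k-1) : ℝ) :=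
          div_le_div_of_nonneg_right hc1 hCR.le
        unfold pSum pUnif
        rw [if_pos hg, sub_div]
        rw [abs_le]
        constructor <;> linarith [hinv, hcC]
    _ = 2 * (((N.choose (k-1) : ℝ) - ((sumsSet k N a).card : ℝ)) / (N.choose (k-1) : ℝ)) := by
        rw [Finset.sum_add_distrib, ← Finset.sum_div, Finset.sum_sub_distrib,
          Finset.sum_const, nsmul_eq_mul, mul_one, hsum, Finset.sum_const, nsmul_eq_mul]
        field_simp
        ring

lemma collisions_le (k N : ℕ) (G : Type) [AddCommGroup G] [Fintype G] [DecidableEq G] :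
    ∑ a : Fin N → G,
      (((Finset.powersetCard (k - 1) (Finset.univ : Finset (Fin N))) ×ˢ
          (Finset.powersetCard (k - 1) (Finset.univ : Finset (Fin N)))).filter
          (fun p => p.1 ≠ p.2 ∧ ∑ i ∈ p.1, a i = ∑ i ∈ p.2, a i)).card ≤
      (N.choose (k-1))^2 * (Fintype.card G) ^ (N - 1) := by
  classical
  set P := Finset.powersetCard (k - 1) (Finset.univ : Finset (Fin N)) with hP
  set T := (P ×ˢ P).filter (fun p => p.1 ≠ p.2) with hT
  have hstep : ∀ a : Fin N → G,
      ((P ×ˢ P).filter (fun p => p.1 ≠ p.2 ∧ ∑ i ∈ p.1, a i = ∑ i ∈ p.2, a i))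
      = T.filter (fun p => ∑ i ∈ p.1, a i = ∑ i ∈ p.2, a i) := by
    intro a; rw [hT, Finset.filter_filter]
  calc ∑ a : Fin N → G, (((P ×ˢ P).filter
          (fun p => p.1 ≠ p.2 ∧ ∑ i ∈ p.1, a i = ∑ i ∈ p.2, a i)).card)
      = ∑ p ∈ T, (Finset.univ.filter
          (fun a : Fin N → G => ∑ i ∈ p.1, a i = ∑ i ∈ p.2, a i)).card := by
        simp_rw [hstep, Finset.card_filter]
        rw [Finset.sum_comm]
    _ ≤ ∑ _p ∈ T, Fintype.card G ^ (N - 1) := by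
        apply Finset.sum_le_sum
        intro p hp
        rw [hT, Finset.mem_filter] at hp
        obtain ⟨hpp, hne⟩ := hp
        rw [Finset.mem_product] at hpp
        exact countSol_le p.1 p.2 hne
          ((Finset.mem_powersetCard.1 hpp.1).2.trans (Finset.mem_powersetCard.1 hpp.2).2.symm)
    _ = T.card * Fintype.card G ^ (N - 1) := by rw [Finset.sum_const, smul_eq_mul]
    _ ≤ (N.choose (k-1))^2 * Fintype.card G ^ (N - 1) := by
        apply Nat.mul_le_mul_right
        calc T.card ≤ (P ×ˢ P).card := Finset.card_le_card (Finset.filter_subset _ _)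
          _ = (N.choose (k-1))^2 := by
            rw [Finset.card_product, hP, Finset.card_powersetCard, Finset.card_univ,
              Fintype.card_fin, sq]

theorem stmt_4 (k N : ℕ) (hk : 3 ≤ k) (hN : k - 1 ≤ N) (c : ℝ) (hc : 0 < c)
    (G : Type) [AddCommGroup G] [Fintype G] [DecidableEq G]
    (hG : (N : ℝ) ^ ((k : ℝ) - 1 + c) ≤ (Fintype.card G : ℝ)) :
    (1 / 2) * ∑ a : Fin N → G, ∑ g : G,
        |pSum k N a g / (Fintype.card G : ℝ) ^ N -
          pUnif k N a g / (Fintype.card G : ℝ) ^ N| ≤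
      1 / (((k - 1).factorial : ℝ) * (N : ℝ) ^ (c / 2)) + (N : ℝ) ^ (-(c / 2)) := by
  have hN2 : 2 ≤ N := by omega
  have hCpos : 0 < N.choose (k-1) := Nat.choose_pos hN
  have hCR : (0:ℝ) < ((N.choose (k-1)) : ℝ) := by exact_mod_cast hCpos
  have hGR : (0:ℝ) < (Fintype.card G : ℝ) := by exact_mod_cast Fintype.card_pos
  have hDR : (0:ℝ) < (Fintype.card G : ℝ) ^ N := pow_pos hGR N
  have hNR : (0:ℝ) < (N : ℝ) := by exact_mod_cast (by omega : 0 < N)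
  have hN1R : (1:ℝ) ≤ (N : ℝ) := by exact_mod_cast (by omega : 1 ≤ N)
  have hPcard : ((Finset.powersetCard (k - 1) (Finset.univ : Finset (Fin N))).card : ℝ)
      = (N.choose (k-1) : ℝ) := by
    rw [Finset.card_powersetCard, Finset.card_univ, Fintype.card_fin]
  have key : ∑ a : Fin N → G, ∑ g : G, |pSum k N a g - pUnif k N a g|
      ≤ 2 * (N.choose (k-1) : ℝ) * (Fintype.card G : ℝ) ^ (N-1) := by
    calc ∑ a : Fin N → G, ∑ g : G, |pSum k N a g - pUnif k N a g|
        ≤ ∑ a : Fin N → G, 2 * (((N.choose (k-1) : ℝ) - ((sumsSet k N a).card : ℝ))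
            / (N.choose (k-1) : ℝ)) :=
          Finset.sum_le_sum fun a _ => tv_le k N hN a
      _ = (2 / (N.choose (k-1):ℝ)) * ∑ a : Fin N → G,
            ((N.choose (k-1) : ℝ) - ((sumsSet k N a).card : ℝ)) := by
          rw [Finset.mul_sum]; apply Finset.sum_congr rfl; intros; ring
      _ ≤ (2 / (N.choose (k-1):ℝ)) *
            (((N.choose (k-1):ℝ))^2 * (Fintype.card G : ℝ) ^ (N-1)) := by
          apply mul_le_mul_of_nonneg_left _ (by positivity)
          calc ∑ a : Fin N → G, ((N.choose (k-1) : ℝ) - ((sumsSet k N a).card : ℝ))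
              ≤ ∑ a : Fin N → G,
                  (((((Finset.powersetCard (k - 1) (Finset.univ : Finset (Fin N))) ×ˢ
                    (Finset.powersetCard (k - 1) (Finset.univ : Finset (Fin N)))).filter
                    (fun p => p.1 ≠ p.2 ∧ ∑ i ∈ p.1, a i = ∑ i ∈ p.2, a i)).card : ℝ)) := by
                apply Finset.sum_le_sum
                intro a _
                have h := deficiency_le
                  (Finset.powersetCard (k - 1) (Finset.univ : Finset (Fin N)))
                  (fun I => ∑ i ∈ I, a i)
                rw [hPcard] at h
                exact h
            _ ≤ ((N.choose (k-1):ℝ))^2 * (Fintype.card G : ℝ) ^ (N-1) := by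
                exact_mod_cast collisions_le k N G
      _ = 2 * (N.choose (k-1) : ℝ) * (Fintype.card G : ℝ) ^ (N-1) := by
          field_simp
  have hmain : (1 / 2) * ∑ a : Fin N → G, ∑ g : G,
        |pSum k N a g / (Fintype.card G : ℝ) ^ N -
          pUnif k N a g / (Fintype.card G : ℝ) ^ N| ≤
      (N.choose (k-1) : ℝ) / (Fintype.card G : ℝ) := by
    calc (1 / 2) * ∑ a : Fin N → G, ∑ g : G,
          |pSum k N a g / (Fintype.card G : ℝ) ^ N -
            pUnif k N a g / (Fintype.card G : ℝ) ^ N|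
        = (1 / 2) * ((∑ a : Fin N → G, ∑ g : G, |pSum k N a g - pUnif k N a g|)
            / (Fintype.card G : ℝ) ^ N) := by
          simp_rw [div_sub_div_same, abs_div, abs_of_pos hDR, ← Finset.sum_div]
      _ ≤ (1 / 2) * ((2 * (N.choose (k-1) : ℝ) * (Fintype.card G : ℝ) ^ (N-1))
            / (Fintype.card G : ℝ) ^ N) := by
          apply mul_le_mul_of_nonneg_left _ (by norm_num)
          exact div_le_div_of_nonneg_right key hDR.le
      _ = (N.choose (k-1) : ℝ) / (Fintype.card G : ℝ) := by
          rw [show (Fintype.card G:ℝ)^N = (Fintype.card G:ℝ)^(N-1) * (Fintype.card G:ℝ) by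
            rw [← pow_succ]; congr 1; omega]
          field_simp
  refine hmain.trans ?_
  -- arithmetic: C/|G| ≤ 1/((k-1)! * N^(c/2)) ≤ RHS
  have hfacpos : (0:ℝ) < ((k-1).factorial : ℝ) := by exact_mod_cast (k-1).factorial_pos
  have hfac : (N.choose (k-1) : ℝ) * ((k-1).factorial : ℝ) ≤ (N:ℝ)^(k-1) := by
    have h1 : (k-1).factorial * N.choose (k-1) ≤ N ^ (k-1) := by
      rw [← Nat.descFactorial_eq_factorial_mul_choose]
      exact Nat.descFactorial_le_pow N (k-1)
    calc (N.choose (k-1) : ℝ) * ((k-1).factorial : ℝ)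
        = (((k-1).factorial * N.choose (k-1) : ℕ) : ℝ) := by push_cast; ring
      _ ≤ (((N ^ (k-1) : ℕ)) : ℝ) := by exact_mod_cast h1
      _ = (N:ℝ)^(k-1) := by push_cast; rfl
  have hGlow : (N:ℝ)^(k-1) * (N:ℝ)^c ≤ (Fintype.card G : ℝ) := by
    have hcast : ((k-1:ℕ):ℝ) = (k:ℝ) - 1 := by
      have : 1 ≤ k := by omega
      push_cast [Nat.cast_sub this]
      ring
    calc (N:ℝ)^(k-1) * (N:ℝ)^c
        = (N:ℝ)^(((k-1:ℕ)):ℝ) * (N:ℝ)^c := by rw [Real.rpow_natCast]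
      _ = (N:ℝ)^((((k-1:ℕ)):ℝ) + c) := (Real.rpow_add hNR _ _).symm
      _ = (N:ℝ)^((k:ℝ) - 1 + c) := by rw [hcast]
      _ ≤ (Fintype.card G : ℝ) := hG
  have hexp : (N:ℝ)^(c/2) ≤ (N:ℝ)^c :=
    Real.rpow_le_rpow_of_exponent_le hN1R (by linarith)
  have hrpos : (0:ℝ) < (N:ℝ)^(c/2) := Real.rpow_pos_of_pos hNR _
  have hfinal : (N.choose (k-1) : ℝ) / (Fintype.card G : ℝ)
      ≤ 1 / (((k-1).factorial : ℝ) * (N:ℝ)^(c/2)) := by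
    rw [div_le_div_iff₀ hGR (by positivity)]
    calc (N.choose (k-1) : ℝ) * (((k-1).factorial : ℝ) * (N:ℝ)^(c/2))
        = ((N.choose (k-1) : ℝ) * ((k-1).factorial : ℝ)) * (N:ℝ)^(c/2) := by ring
      _ ≤ (N:ℝ)^(k-1) * (N:ℝ)^(c/2) := by
          apply mul_le_mul_of_nonneg_right hfac hrpos.le
      _ ≤ (N:ℝ)^(k-1) * (N:ℝ)^c := by
          apply mul_le_mul_of_nonneg_left hexp (by positivity)
      _ ≤ (Fintype.card G : ℝ) := hGlow
      _ = 1 * (Fintype.card G : ℝ) := (one_mul _).symm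
  refine hfinal.trans ?_
  have : (0:ℝ) ≤ (N:ℝ) ^ (-(c/2)) := (Real.rpow_pos_of_pos hNR _).le
  linarith
end
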